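/- (Backward expansion at the top.) In the setting of the finite backward sequence with $P_n^n = \delta_h$, $Q$ supported in $[0,h]$ with $Q(\{h\}) = 0$ and all moments $m_j = \int x^j Q(dx) > 0$, one has for all $n \ge 1$: $P_0^n(dx) = \Big(\prod_{l=1}^n \frac{h(1-b_l)}{\int y P_l^n(dy)}\Big)\delta_h(dx) + \sum_{j=0}^{n-1}\Big(\prod_{l=1}^{j}\frac{1-b_l}{\int y P_l^n(dy)}\Big) b_{j+1}\, m_j\, Q^j(dx)$, where $Q^j(dx) = x^j Q(dx)/m_j$. In particular $P_0^n(\{h\}) = \prod_{l=1}^n \frac{h(1-b_l)}{\int y P_l^n(dy)}$. -/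

import Mathlib

open MeasureTheory Set

lemma withDensity_dirac' (a : ℝ) (f : ℝ → ENNReal) :
    (Measure.dirac a).withDensity f = f a • Measure.dirac a := by
  ext s hs
  classical
  rw [withDensity_apply _ hs, setLIntegral_dirac f s, Measure.smul_apply,
    Measure.dirac_apply, smul_eq_mul]
  by_cases hmem : a ∈ s <;> simp [hmem]

lemma withDensity_finset_sum {ι : Type*} (s : Finset ι) (μ : ι → Measure ℝ) (f : ℝ → ENNReal) :
    (∑ i ∈ s, μ i).withDensity f = ∑ i ∈ s, (μ i).withDensity f := by
  classical
  induction s using Finset.induction with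
  | empty => simp
  | insert a s hns ih =>
      rw [Finset.sum_insert hns, Finset.sum_insert hns, withDensity_add_measure, ih]

/-- The one-step mutation-selection (Kingman) map. -/
noncomputable def kingmanMap (b : ℝ) (Q u : Measure ℝ) : Measure ℝ :=
  u.withDensity (fun x => ENNReal.ofReal ((1 - b) * x / ∫ y, y ∂u))
    + ENNReal.ofReal b • Q

theorem stmt_16 (h : ℝ) (hh : h ∈ Set.Ioc (0:ℝ) 1)
    (Q : Measure ℝ) (hQ : IsProbabilityMeasure Q)
    (hQsupp : Q (Set.Icc (0:ℝ) h)ᶜ = 0) (hQh : Q {h} = 0)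
    (hm : ∀ j : ℕ, 0 < ∫ x, x ^ j ∂Q)
    (b : ℕ → ℝ) (hb : ∀ j, b j ∈ Set.Ico (0:ℝ) 1)
    (Pb : ℕ → ℕ → Measure ℝ)
    (hfix : ∀ n, Pb n n = Measure.dirac h)
    (hrec : ∀ n, ∀ j < n, Pb n j = kingmanMap (b (j+1)) Q (Pb n (j+1)))
    (hmean : ∀ n, ∀ j ≤ n, 0 < ∫ y, y ∂Pb n j) :
    ∀ n, 1 ≤ n →
      (Pb n 0
          = ENNReal.ofReal (∏ l ∈ Finset.Icc 1 n, (h * (1 - b l) / ∫ y, y ∂Pb n l))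
              • Measure.dirac h
            + ∑ j ∈ Finset.range n,
                ENNReal.ofReal ((∏ l ∈ Finset.Icc 1 j, ((1 - b l) / ∫ y, y ∂Pb n l))
                    * b (j+1) * (∫ x, x ^ j ∂Q))
                  • Q.withDensity (fun x => ENNReal.ofReal (x ^ j / ∫ y, y ^ j ∂Q)))
        ∧ Pb n 0 {h}
            = ENNReal.ofReal (∏ l ∈ Finset.Icc 1 n, (h * (1 - b l) / ∫ y, y ∂Pb n l)) := by
  have hh0 : (0:ℝ) < h := hh.1
  have haeQ : ∀ᵐ x ∂Q, x ∈ Set.Icc (0:ℝ) h := by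
    rw [ae_iff]
    have : {x : ℝ | ¬ x ∈ Set.Icc (0:ℝ) h} = (Set.Icc (0:ℝ) h)ᶜ := rfl
    rw [this]; exact hQsupp
  -- the generalized claim
  have key : ∀ n, ∀ d j : ℕ, j + d = n →
      Pb n j
        = ENNReal.ofReal (∏ l ∈ Finset.Icc (j+1) n, (h * (1 - b l) / ∫ y, y ∂Pb n l))
            • Measure.dirac h
          + ∑ k ∈ Finset.range d,
              ENNReal.ofReal ((∏ l ∈ Finset.Icc (j+1) (j+k), ((1 - b l) / ∫ y, y ∂Pb n l))
                  * b (j+k+1) * (∫ x, x ^ k ∂Q))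
                • Q.withDensity (fun x => ENNReal.ofReal (x ^ k / ∫ y, y ^ k ∂Q)) := by
    intro n d
    induction d with
    | zero =>
        intro j hj
        have hj' : j = n := by omega
        subst hj'
        rw [hfix, Finset.Icc_eq_empty (by omega)]
        simp
    | succ d ih =>
        intro j hj
        have hjn : j < n := by omega
        have hMpos : 0 < ∫ y, y ∂Pb n (j+1) := hmean n (j+1) (by omega)
        obtain ⟨M, hM⟩ : ∃ M, ∫ y, y ∂Pb n (j+1) = M := ⟨_, rfl⟩
        have hMpos' : 0 < M := hM ▸ hMpos
        have hβ := hb (j+1)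
        have hβ0 : 0 ≤ b (j+1) := hβ.1
        have hβ1 : 0 < 1 - b (j+1) := by linarith [hβ.2]
        set g : ℝ → ENNReal := fun x => ENNReal.ofReal ((1 - b (j+1)) * x / M) with hg
        have hgmeas : Measurable g :=
          ((measurable_id.const_mul _).div_const _).ennreal_ofReal
        have hfmeas : ∀ k : ℕ,
            Measurable (fun x : ℝ => ENNReal.ofReal (x ^ k / ∫ y, y ^ k ∂Q)) := fun k =>
          ((measurable_id.pow_const _).div_const _).ennreal_ofReal
        have hexp : Pb n j = (Pb n (j+1)).withDensity g + ENNReal.ofReal (b (j+1)) • Q := by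
          rw [hrec n j hjn]; unfold kingmanMap; rw [hM]
        rw [hexp, ih (j+1) (by omega)]
        -- step on the Q-density parts
        have hstep : ∀ k : ℕ,
            (Q.withDensity (fun x => ENNReal.ofReal (x ^ k / ∫ y, y ^ k ∂Q))).withDensity g
              = ENNReal.ofReal
                  ((1 - b (j+1)) * (∫ y, y ^ (k+1) ∂Q) / ((∫ y, y ^ k ∂Q) * M))
                • Q.withDensity (fun x => ENNReal.ofReal (x ^ (k+1) / ∫ y, y ^ (k+1) ∂Q)) := by
          intro k
          rw [← withDensity_mul _ (hfmeas k) hgmeas]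
          rw [← withDensity_smul _ (hfmeas (k+1))]
          apply withDensity_congr_ae
          filter_upwards [haeQ] with x hx
          simp only [Pi.mul_apply, Pi.smul_apply, smul_eq_mul, hg]
          rw [← ENNReal.ofReal_mul (div_nonneg (pow_nonneg hx.1 k) (hm k).le),
            ← ENNReal.ofReal_mul
              (div_nonneg (mul_nonneg hβ1.le (hm (k+1)).le)
                (mul_nonneg (hm k).le hMpos'.le))]
          congr 1
          have h1 : (∫ y, y ^ k ∂Q) ≠ 0 := (hm k).ne'
          have h2 : (∫ y, y ^ (k+1) ∂Q) ≠ 0 := (hm (k+1)).ne'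
          have h3 : M ≠ 0 := hMpos'.ne'
          field_simp
          ring
        -- dirac part
        rw [withDensity_add_measure, withDensity_smul_measure, withDensity_dirac',
          withDensity_finset_sum]
        simp only [withDensity_smul_measure, hstep, smul_smul]
        -- combine coefficients
        have hprod_nonneg : 0 ≤ ∏ l ∈ Finset.Icc (j+2) n, (h * (1 - b l) / ∫ y, y ∂Pb n l) := by
          apply Finset.prod_nonneg
          intro l hl
          have hl' := Finset.mem_Icc.mp hl
          have := hb l
          exact div_nonneg (mul_nonneg hh0.le (by linarith [this.2])) (hmean n l hl'.2).le
        have hdirac_coeff :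
            ENNReal.ofReal (∏ l ∈ Finset.Icc (j+2) n, (h * (1 - b l) / ∫ y, y ∂Pb n l))
                * g h
              = ENNReal.ofReal (∏ l ∈ Finset.Icc (j+1) n, (h * (1 - b l) / ∫ y, y ∂Pb n l)) := by
          have hsplit : ∏ l ∈ Finset.Icc (j+1) n, (h * (1 - b l) / ∫ y, y ∂Pb n l)
              = (h * (1 - b (j+1)) / ∫ y, y ∂Pb n (j+1))
                * ∏ l ∈ Finset.Icc (j+2) n, (h * (1 - b l) / ∫ y, y ∂Pb n l) := by
            rw [← Finset.Ico_add_one_right_eq_Icc (j+1) n, Finset.prod_eq_prod_Ico_succ_bot (by omega),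
              Finset.Ico_add_one_right_eq_Icc]
          rw [hg]
          rw [← ENNReal.ofReal_mul hprod_nonneg]
          congr 1
          rw [hsplit, hM]
          ring
        rw [hdirac_coeff]
        -- combine the sums
        have hsum_coeff : ∀ k : ℕ, k < d →
            ENNReal.ofReal ((∏ l ∈ Finset.Icc (j+2) (j+1+k), ((1 - b l) / ∫ y, y ∂Pb n l))
                  * b (j+1+k+1) * (∫ x, x ^ k ∂Q))
                * ENNReal.ofReal
                  ((1 - b (j+1)) * (∫ y, y ^ (k+1) ∂Q) / ((∫ y, y ^ k ∂Q) * M))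
              = ENNReal.ofReal
                  ((∏ l ∈ Finset.Icc (j+1) (j+(k+1)), ((1 - b l) / ∫ y, y ∂Pb n l))
                    * b (j+(k+1)+1) * (∫ x, x ^ (k+1) ∂Q)) := by
          intro k hk
          have hA : 0 ≤ ∏ l ∈ Finset.Icc (j+2) (j+1+k), ((1 - b l) / ∫ y, y ∂Pb n l) := by
            apply Finset.prod_nonneg
            intro l hl
            have hl' := Finset.mem_Icc.mp hl
            have := hb l
            exact div_nonneg (by linarith [this.2]) (hmean n l (by omega)).le
          rw [← ENNReal.ofReal_mul (mul_nonneg (mul_nonneg hA (hb _).1) (hm k).le)]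
          congr 1
          have hidx : j + (k+1) = j + 1 + k := by omega
          rw [hidx]
          have hsplit2 : ∏ l ∈ Finset.Icc (j+1) (j+1+k), ((1 - b l) / ∫ y, y ∂Pb n l)
              = ((1 - b (j+1)) / ∫ y, y ∂Pb n (j+1))
                * ∏ l ∈ Finset.Icc (j+2) (j+1+k), ((1 - b l) / ∫ y, y ∂Pb n l) := by
            rw [← Finset.Ico_add_one_right_eq_Icc (j+1) (j+1+k), Finset.prod_eq_prod_Ico_succ_bot (by omega),
              Finset.Ico_add_one_right_eq_Icc]
          rw [hsplit2, hM]
          set P := ∏ l ∈ Finset.Icc (j+2) (j+1+k), ((1 - b l) / ∫ y, y ∂Pb n l) with hP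
          have h1 : (∫ y, y ^ k ∂Q) ≠ 0 := (hm k).ne'
          have h3 : M ≠ 0 := hMpos'.ne'
          field_simp
        -- the new bottom term
        have hmq0 : (∫ y, (y:ℝ) ^ 0 ∂Q) = 1 := by simp
        have hbot :
            ENNReal.ofReal (b (j+1)) • Q
              = ENNReal.ofReal ((∏ l ∈ Finset.Icc (j+1) (j+0), ((1 - b l) / ∫ y, y ∂Pb n l))
                    * b (j+0+1) * (∫ x, x ^ 0 ∂Q))
                  • Q.withDensity (fun x => ENNReal.ofReal (x ^ 0 / ∫ y, y ^ 0 ∂Q)) := by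
          rw [Finset.Icc_eq_empty (by omega), Finset.prod_empty, one_mul]
          have : (fun x : ℝ => ENNReal.ofReal (x ^ 0 / ∫ y, y ^ 0 ∂Q)) = 1 := by
            funext x; simp [hmq0]
          rw [this, withDensity_one, hmq0]
          norm_num
        rw [Finset.sum_range_succ', ← hbot, add_assoc]
        congr 1
        congr 1
        exact Finset.sum_congr rfl (fun k hk => by
          rw [hsum_coeff k (Finset.mem_range.mp hk)])
  intro n hn
  have hkey := key n n 0 (by omega)
  simp only [zero_add] at hkey
  refine ⟨hkey, ?_⟩
  rw [hkey]
  rw [Measure.add_apply, Measure.smul_apply, smul_eq_mul,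
    Measure.dirac_apply_of_mem (Set.mem_singleton h), mul_one]
  have hzero : (∑ j ∈ Finset.range n,
      ENNReal.ofReal ((∏ l ∈ Finset.Icc 1 j, ((1 - b l) / ∫ y, y ∂Pb n l))
          * b (j+1) * (∫ x, x ^ j ∂Q))
        • Q.withDensity (fun x => ENNReal.ofReal (x ^ j / ∫ y, y ^ j ∂Q))) {h} = 0 := by
    rw [Measure.finset_sum_apply]
    apply Finset.sum_eq_zero
    intro j _
    rw [Measure.smul_apply, smul_eq_mul,
      withDensity_apply _ (measurableSet_singleton h),
      Measure.restrict_eq_zero.mpr hQh, lintegral_zero_measure, mul_zero]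
  rw [hzero, add_zero]
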